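/- In the rational group algebra of the symmetric group S_{n+1}, let x_j denote the sum of all minimal-length left coset representatives of the Young subgroup S_{j+1} x S_1^{n-j} (the stabilizer of the points j+2,...,n+1 that is the parabolic subgroup generated by the adjacent transpositions s_1,...,s_j). Then for 0 <= k < n, x_{n-1} * x_{n-k} = k * x_{n-k} + x_{n-k-1}. -/

import Mathlib

open Finset Equiv

def PP (n j : ℕ) (w : Equiv.Perm (Fin (n+1))) : Prop :=
  ∀ a b : Fin (n+1), a < b → (b : ℕ) ≤ j → w a < w b

instance (n j : ℕ) (w : Equiv.Perm (Fin (n+1))) : Decidable (PP n j w) := by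
  unfold PP; infer_instance

noncomputable def dd (n : ℕ) (m : Fin (n+1)) : Equiv.Perm (Fin (n+1)) :=
  Fin.revPerm * Fin.cycleRange m.rev * Fin.revPerm

lemma dd_coe (n : ℕ) (m x : Fin (n+1)) :
    (dd n m x : ℕ) = if x < m then (x : ℕ) else if x = m then n else (x : ℕ) - 1 := by
  have hx := x.isLt
  have hm := m.isLt
  show ((Fin.revPerm (Fin.cycleRange m.rev (Fin.revPerm x)) : Fin (n+1)) : ℕ) = _
  rcases lt_trichotomy x m with h | h | h
  · rw [if_pos h]
    have : m.rev < x.rev := Fin.rev_lt_rev.2 h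
    show ((Fin.rev (Fin.cycleRange m.rev (Fin.rev x)) : Fin (n+1)) : ℕ) = _
    rw [Fin.cycleRange_of_gt this, Fin.rev_rev]
  · rw [if_neg (by simp [h]), if_pos h, h]
    show ((Fin.rev (Fin.cycleRange m.rev (Fin.rev m)) : Fin (n+1)) : ℕ) = _
    rw [Fin.cycleRange_self]
    simp [Fin.rev_zero]
  · rw [if_neg (by omega), if_neg (by exact ne_of_gt h)]
    have h2 : x.rev < m.rev := Fin.rev_lt_rev.2 h
    show ((Fin.rev (Fin.cycleRange m.rev (Fin.rev x)) : Fin (n+1)) : ℕ) = _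
    have hval : ((x.rev + 1 : Fin (n+1)) : ℕ) = (x.rev : ℕ) + 1 :=
      Fin.val_add_one_of_lt (lt_of_lt_of_le h2 (Fin.le_last _))
    rw [Fin.cycleRange_of_lt h2, Fin.val_rev, hval, Fin.val_rev]
    omega

lemma dd_self (n : ℕ) (m : Fin (n+1)) : dd n m m = Fin.last n := by
  ext
  rw [dd_coe, if_neg (lt_irrefl m), if_pos rfl, Fin.val_last]

lemma dd_mono (n : ℕ) {m x y : Fin (n+1)} (hx : x ≠ m) (hy : y ≠ m) (hxy : x < y) :
    dd n m x < dd n m y := by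
  have hx' : (x : ℕ) ≠ (m : ℕ) := fun h => hx (Fin.ext h)
  have hy' : (y : ℕ) ≠ (m : ℕ) := fun h => hy (Fin.ext h)
  have hxy' : (x : ℕ) < (y : ℕ) := hxy
  rw [Fin.lt_def, dd_coe, dd_coe]
  have := x.isLt; have := y.isLt; have := m.isLt
  simp only [Fin.lt_def, Fin.ext_iff]
  split_ifs <;> omega

lemma dd_lt_last (n : ℕ) {m x : Fin (n+1)} (hx : x ≠ m) : dd n m x < Fin.last n := by
  refine lt_of_le_of_ne (Fin.le_last _) fun h => hx ?_
  have : dd n m x = dd n m m := by rw [dd_self, h]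
  exact (dd n m).injective this

lemma dd_inj (n : ℕ) : Function.Injective (fun m : Fin (n+1) => (dd n m)⁻¹) := by
  intro a b h
  simp only [inv_inj] at h
  have h1 : dd n b a = Fin.last n := by rw [← h]; exact dd_self n a
  have h2 : dd n b b = Fin.last n := dd_self n b
  exact (dd n b).injective (h1.trans h2.symm)

lemma perm_strictMono_eq_one {N : ℕ} (g : Equiv.Perm (Fin N)) (h : StrictMono (⇑g)) : g = 1 := by
  have inst : WellFoundedLT (Fin N) := by infer_instance
  have : (⇑g) = (id : Fin N → Fin N) :=
    Set.range_injOn_strictMono h strictMono_id (by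
      rw [Set.range_id]
      exact Set.range_eq_univ.2 g.surjective)
  ext x
  exact congrArg Fin.val (congrFun this x)

lemma A1 (n : ℕ) (hn : 1 ≤ n) (u : Equiv.Perm (Fin (n+1))) (h : PP n (n-1) u) :
    u⁻¹ = dd n (u (Fin.last n)) := by
  set m := u (Fin.last n) with hm
  have hg : StrictMono (⇑(dd n m * u)) := by
    intro a b hab
    simp only [Equiv.Perm.mul_apply]
    rcases eq_or_lt_of_le (Fin.le_last b) with hb | hb
    · rw [hb, ← hm, dd_self]
      have ha : a ≠ Fin.last n := by rw [← hb]; exact ne_of_lt (hb ▸ hab)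
      have : u a ≠ m := fun hc => ha (u.injective (hc.trans hm))
      exact dd_lt_last n this
    · have hbv : (b : ℕ) ≤ n - 1 := by
        have := hb; rw [Fin.lt_def, Fin.val_last] at this; omega
      have hab' : u a < u b := h a b hab hbv
      have hua : u a ≠ m := fun hc => (ne_of_lt (lt_of_lt_of_le hab hb.le))
        (u.injective (hc.trans hm))
      have hub : u b ≠ m := fun hc => (ne_of_lt hb) (u.injective (hc.trans hm))
      exact dd_mono n hua hub hab'
  have := perm_strictMono_eq_one _ hg
  rw [mul_eq_one_iff_eq_inv] at this
  exact this.symm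

lemma A2 (n : ℕ) (hn : 1 ≤ n) (u : Equiv.Perm (Fin (n+1))) (m : Fin (n+1)) (h : u⁻¹ = dd n m) :
    PP n (n-1) u := by
  have key : ∀ x : Fin (n+1), dd n m (u x) = x := by
    intro x
    rw [← h]; exact u.symm_apply_apply x
  have hulast : u (Fin.last n) = m := by
    have := key (Fin.last n)
    by_contra hc
    exact absurd this (ne_of_lt (dd_lt_last n hc))
  intro a b hab hbv
  have hb : b ≠ Fin.last n := by
    intro hc; rw [hc, Fin.val_last] at hbv; omega
  have ha : a ≠ Fin.last n := by
    intro hc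
    have : b ≤ a := hc ▸ Fin.le_last b
    exact absurd hab (not_lt.2 this)
  have hua : u a ≠ m := fun hc => ha (u.injective (hc.trans hulast.symm))
  have hub : u b ≠ m := fun hc => hb (u.injective (hc.trans hulast.symm))
  rcases lt_trichotomy (u a) (u b) with hlt | heq | hgt
  · exact hlt
  · exact absurd (u.injective heq) (ne_of_lt hab)
  · have := dd_mono n hub hua hgt
    rw [key a, key b] at this
    exact absurd hab (not_lt.2 this.le)

lemma memCond (n r : ℕ) (hr1 : 1 ≤ r) (hrn : r ≤ n) (m : Fin (n+1)) (w : Equiv.Perm (Fin (n+1))) :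
    PP n r (dd n m * w) ↔
      ((∀ i : Fin (n+1), (i : ℕ) ≤ r → w i ≠ m) ∧ PP n r w) ∨
      (w ⟨r, by omega⟩ = m ∧ PP n (r-1) w) := by
  set p : Fin (n+1) := ⟨r, by omega⟩ with hp
  constructor
  · intro h
    by_cases hc : ∀ i : Fin (n+1), (i : ℕ) ≤ r → w i ≠ m
    · left
      refine ⟨hc, fun a b hab hbv => ?_⟩
      have ha := hc a (le_trans (le_of_lt hab) hbv)
      have hb := hc b hbv
      have hd := h a b hab hbv
      simp only [Equiv.Perm.mul_apply] at hd
      rcases lt_trichotomy (w a) (w b) with hlt | heq | hgt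
      · exact hlt
      · exact absurd (w.injective heq) (ne_of_lt hab)
      · exact absurd hd (not_lt.2 (dd_mono n hb ha hgt).le)
    · right
      push_neg at hc
      obtain ⟨i, hir, him⟩ := hc
      have hip : i = p := by
        by_contra hne
        have hilt : i < p := by
          rw [Fin.lt_def]
          exact lt_of_le_of_ne hir (fun hc2 => hne (Fin.ext hc2))
        have := h i p hilt (le_refl r)
        simp only [Equiv.Perm.mul_apply, him, dd_self] at this
        exact absurd this (not_lt.2 (Fin.le_last _))
      refine ⟨hip ▸ him, fun a b hab hbv => ?_⟩
      have hanep : a ≠ p := by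
        intro hc2; have hc3 : (a : ℕ) = r := by rw [hc2]
        have := Fin.lt_def.1 hab; omega
      have hbnep : b ≠ p := by
        intro hc2; have hc3 : (b : ℕ) = r := by rw [hc2]
        omega
      have hwa : w a ≠ m := fun hc2 => hanep (w.injective (hc2.trans (hip ▸ him).symm))
      have hwb : w b ≠ m := fun hc2 => hbnep (w.injective (hc2.trans (hip ▸ him).symm))
      have hd := h a b hab (by omega)
      simp only [Equiv.Perm.mul_apply] at hd
      rcases lt_trichotomy (w a) (w b) with hlt | heq | hgt
      · exact hlt
      · exact absurd (w.injective heq) (ne_of_lt hab)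
      · exact absurd hd (not_lt.2 (dd_mono n hwb hwa hgt).le)
  · intro h a b hab hbv
    simp only [Equiv.Perm.mul_apply]
    rcases h with ⟨hm, hP⟩ | ⟨hpm, hP⟩
    · exact dd_mono n (hm a (le_trans (le_of_lt hab) hbv)) (hm b hbv) (hP a b hab hbv)
    · have hanep : a ≠ p := by
        intro hc2; have hc3 : (a : ℕ) = r := by rw [hc2]
        have := Fin.lt_def.1 hab; omega
      have hwa : w a ≠ m := fun hc2 => hanep (w.injective (hc2.trans hpm.symm))
      by_cases hbp : b = p
      · rw [hbp, hpm, dd_self]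
        exact dd_lt_last n hwa
      · have hbv' : (b : ℕ) ≤ r - 1 := by
          have : (b : ℕ) ≠ r := fun hc2 => hbp (Fin.ext hc2)
          omega
        have hwb : w b ≠ m := fun hc2 => hbp (w.injective (hc2.trans hpm.symm))
        exact dd_mono n hwa hwb (hP a b hab hbv')

lemma PP_mono (n : ℕ) {j j' : ℕ} (h : j' ≤ j) {w : Equiv.Perm (Fin (n+1))} (hw : PP n j w) :
    PP n j' w := fun a b hab hbv => hw a b hab (le_trans hbv h)

lemma S_eq (n r : ℕ) (hr1 : 1 ≤ r) (hrn : r ≤ n) (w : Equiv.Perm (Fin (n+1))) :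
    (Finset.univ.filter (fun u : Equiv.Perm (Fin (n+1)) =>
        PP n (n-1) u ∧ PP n r (u⁻¹ * w))) =
      (Finset.univ.filter (fun m : Fin (n+1) =>
        ((∀ i : Fin (n+1), (i : ℕ) ≤ r → w i ≠ m) ∧ PP n r w) ∨
        (w ⟨r, by omega⟩ = m ∧ PP n (r-1) w))).image (fun m => (dd n m)⁻¹) := by
  ext u
  simp only [Finset.mem_filter, Finset.mem_image, Finset.mem_univ, true_and]
  constructor
  · rintro ⟨h1, h2⟩
    have hinv := A1 n (le_trans hr1 hrn) u h1
    refine ⟨u (Fin.last n), ?_, by rw [← hinv, inv_inv]⟩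
    rw [← memCond n r hr1 hrn]
    rwa [← hinv]
  · rintro ⟨m, hm, rfl⟩
    have hinv : ((dd n m)⁻¹)⁻¹ = dd n m := inv_inv _
    refine ⟨A2 n (le_trans hr1 hrn) _ m hinv, ?_⟩
    rw [hinv]
    exact (memCond n r hr1 hrn m w).2 hm

lemma count (n k : ℕ) (hk : k < n) (w : Equiv.Perm (Fin (n+1))) :
    (Finset.univ.filter (fun u : Equiv.Perm (Fin (n+1)) =>
        PP n (n-1) u ∧ PP n (n-k) (u⁻¹ * w))).card =
      if PP n (n-k) w then k + 1 else if PP n (n-k-1) w then 1 else 0 := by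
  have hr1 : 1 ≤ n - k := by omega
  have hrn : n - k ≤ n := by omega
  set r := n - k with hr
  have hrk : n - k - 1 = r - 1 := rfl
  set p : Fin (n+1) := ⟨r, by omega⟩ with hp
  rw [S_eq n r hr1 hrn w, Finset.card_image_of_injective _ (dd_inj n)]
  by_cases hP : PP n r w
  · rw [if_pos hP]
    have hP' : PP n (r-1) w := PP_mono n (by omega) hP
    have hfe : (Finset.univ.filter (fun m : Fin (n+1) =>
        ((∀ i : Fin (n+1), (i : ℕ) ≤ r → w i ≠ m) ∧ PP n r w) ∨
        (w p = m ∧ PP n (r-1) w))) =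
        (Finset.univ.filter (fun m : Fin (n+1) =>
          (∀ i : Fin (n+1), (i : ℕ) ≤ r → w i ≠ m))) ∪ {w p} := by
      ext m
      simp only [Finset.mem_filter, Finset.mem_union, Finset.mem_singleton, Finset.mem_univ,
        true_and]
      constructor
      · rintro (⟨h1, _⟩ | ⟨h1, _⟩)
        · exact Or.inl h1
        · exact Or.inr h1.symm
      · rintro (h1 | h1)
        · exact Or.inl ⟨h1, hP⟩
        · exact Or.inr ⟨h1.symm, hP'⟩
    rw [hfe, Finset.card_union_of_disjoint, Finset.card_singleton]
    · congr 1
      have himg : (Finset.univ.filter (fun m : Fin (n+1) =>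
          (∀ i : Fin (n+1), (i : ℕ) ≤ r → w i ≠ m))) =
          Finset.univ \ (Finset.Iic p).image w := by
        ext m
        simp only [Finset.mem_filter, Finset.mem_sdiff, Finset.mem_univ, true_and,
          Finset.mem_image, Finset.mem_Iic, not_exists, not_and]
        constructor
        · intro h i hi
          exact h i (Fin.le_def.1 hi)
        · intro h i hi
          exact h i (Fin.le_def.2 hi)
      rw [himg, Finset.card_sdiff_of_subset (Finset.subset_univ _),
        Finset.card_image_of_injective _ w.injective, Finset.card_univ, Fintype.card_fin,
        Fin.card_Iic]
      show n + 1 - (r + 1) = k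
      omega
    · rw [Finset.disjoint_singleton_right, Finset.mem_filter]
      rintro ⟨-, h⟩
      exact h p (le_refl r) rfl
  · rw [if_neg hP]
    by_cases hP' : PP n (r-1) w
    · rw [hrk, if_pos hP']
      have hfe : (Finset.univ.filter (fun m : Fin (n+1) =>
          ((∀ i : Fin (n+1), (i : ℕ) ≤ r → w i ≠ m) ∧ PP n r w) ∨
          (w p = m ∧ PP n (r-1) w))) = {w p} := by
        ext m
        simp only [Finset.mem_filter, Finset.mem_singleton, Finset.mem_univ, true_and]
        constructor
        · rintro (⟨-, h⟩ | ⟨h, -⟩)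
          · exact absurd h hP
          · exact h.symm
        · intro h
          exact Or.inr ⟨h.symm, hP'⟩
      rw [hfe, Finset.card_singleton]
    · rw [hrk, if_neg hP']
      rw [Finset.card_eq_zero, Finset.filter_eq_empty_iff]
      rintro m -
      rintro (⟨-, h⟩ | ⟨-, h⟩)
      · exact hP h
      · exact hP' h


/-- In the group algebra `ℚ[S_N]` (permutations of `{0, 1, ..., N-1}`, corresponding to
`{1, ..., N}` in one-based indexing), `xA N j` is the sum of all permutations `w` with
`w 0 < w 1 < ... < w j`, i.e. the minimal-length left coset representatives of the
parabolic (Young) subgroup generated by the adjacent transpositions `s_1, ..., s_j`,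
which is the stabilizer of the points `j+2, ..., N` (one-based). -/
noncomputable def xA (N j : ℕ) : MonoidAlgebra ℚ (Equiv.Perm (Fin N)) :=
  ∑ w ∈ Finset.univ.filter
      (fun w : Equiv.Perm (Fin N) => ∀ a b : Fin N, a < b → (b : ℕ) ≤ j → w a < w b),
    MonoidAlgebra.single w 1

lemma xA_eq (n j : ℕ) :
    xA (n+1) j = ∑ w ∈ Finset.univ.filter (fun w => PP n j w), MonoidAlgebra.single w 1 := by
  unfold xA PP
  congr 1

/-- In `ℚ[S_{n+1}]`, for `0 ≤ k < n`: `x_{n-1} * x_{n-k} = k • x_{n-k} + x_{n-k-1}`. -/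
theorem xA_mul (n k : ℕ) (hk : k < n) :
    xA (n + 1) (n - 1) * xA (n + 1) (n - k) =
      (k : ℚ) • xA (n + 1) (n - k) + xA (n + 1) (n - k - 1) := by
  simp only [xA_eq]
  refine MonoidAlgebra.coeff_injective (Finsupp.ext fun w => ?_)
  rw [Finset.sum_mul_sum]
  simp only [MonoidAlgebra.single_mul_single, one_mul]
  have happ : ∀ (s : Finset (Equiv.Perm (Fin (n+1))))
      (f : Equiv.Perm (Fin (n+1)) → MonoidAlgebra ℚ (Equiv.Perm (Fin (n+1)))),
      (∑ i ∈ s, f i).coeff w = ∑ i ∈ s, (f i).coeff w := fun s f => by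
          rw [MonoidAlgebra.coeff_sum]; exact Finsupp.finset_sum_apply s _ w
  rw [MonoidAlgebra.coeff_add, Finsupp.add_apply, MonoidAlgebra.coeff_smul, Finsupp.smul_apply]
  simp only [happ]
  simp only [MonoidAlgebra.coeff_single, Finsupp.single_apply]
  have hcond : ∀ (u v : Equiv.Perm (Fin (n+1))), (u * v = w) ↔ (v = u⁻¹ * w) := by
    intro u v
    rw [eq_inv_mul_iff_mul_eq]
  simp_rw [hcond]
  simp only [Finset.sum_ite_eq', Finset.mem_filter, Finset.mem_univ, true_and]
  rw [Finset.sum_boole, Finset.filter_filter]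
  rw [count n k hk w]
  by_cases h1 : PP n (n-k) w
  · have h2 : PP n (n-k-1) w := PP_mono n (by omega) h1
    rw [if_pos h1, if_pos h1, if_pos h2]
    push_cast
    rw [smul_eq_mul]
    ring
  · rw [if_neg h1, if_neg h1]
    by_cases h2 : PP n (n-k-1) w
    · rw [if_pos h2, if_pos h2]
      simp
    · rw [if_neg h2, if_neg h2]
      simp
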